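/- Let E₀, E₁ be Banach spaces with E₁ continuously and densely embedded in E₀, fix μ ∈ (0,1), an open set V_μ ⊆ E_μ, and let F₂ satisfy hypothesis (H2) with exponents β ∈ (μ,1), β_j ∈ [μ,β], ρ_j ≥ 0 (j = 1,…,m). Let x₀ ∈ V_μ and ε₀ > 0 be such that B̄_{E_μ}(x₀,ε₀) ⊆ V_μ, let T > 0, and let v ∈ 𝔼_{1,μ}([0,T]) satisfy v(t) ∈ B̄_{E_μ}(x₀,ε₀) for all t ∈ [0,T] (note v(t) ∈ E₁ ⊆ E_β for t ∈ (0,T], so F₂(v(t)) is defined). Then: (a) the map t ↦ F₂(v(t)) is continuous from (0,T] into E₀; (b) F₂∘v belongs to 𝔼_{0,μ}([0,T]) = BC_{1−μ}([0,T],E₀), i.e. t^{1−μ}‖F₂(v(t))‖_{E₀} is bounded on (0,T] and tends to 0 as t → 0⁺; (c) the norm ‖F₂∘v‖_{𝔼_{0,μ}([0,T′])} = sup_{t∈(0,T′]} t^{1−μ}‖F₂(v(t))‖_{E₀} tends to 0 as T′ → 0⁺. -/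

import Mathlib

open Set Filter
open scoped ENNReal

namespace QPE

variable {E : Type*} [NormedAddCommGroup E] [NormedSpace ℝ E]

/-- Continuity of `u` on `s ⊆ ℝ` with respect to the generalized norm `N` on `E`. -/
def NContOn (N : E → ℝ) (u : ℝ → E) (s : Set ℝ) : Prop :=
  ∀ t ∈ s, ∀ ε > 0, ∃ δ > 0, ∀ t' ∈ s, |t' - t| < δ → N (u t' - u t) < ε

/-- Uniform continuity of `u` on `s ⊆ ℝ` with respect to `N`. -/
def NUnifContOn (N : E → ℝ) (u : ℝ → E) (s : Set ℝ) : Prop :=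
  ∀ ε > 0, ∃ δ > 0, ∀ t ∈ s, ∀ t' ∈ s, |t' - t| < δ → N (u t' - u t) < ε

/-- `u ∈ BC_{1-μ}([0,T], X)` where the space `X` has carrier `S` and norm `N`:
continuity on `(0,T]`, boundedness of `t^{1-μ} N (u t)` and vanishing as `t → 0⁺`. -/
def MemBC (μ T : ℝ) (S : Set E) (N : E → ℝ) (u : ℝ → E) : Prop :=
  (∀ t ∈ Ioc (0:ℝ) T, u t ∈ S) ∧ NContOn N u (Ioc 0 T) ∧
    (∃ M : ℝ, ∀ t ∈ Ioc (0:ℝ) T, t ^ (1 - μ) * N (u t) ≤ M) ∧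
    Tendsto (fun t : ℝ => t ^ (1 - μ) * N (u t)) (nhdsWithin 0 (Ioi 0)) (nhds 0)

/-- `u ∈ 𝔼_{1,μ}([0,T]) = BC¹_{1-μ}([0,T],E₀) ∩ BC_{1-μ}([0,T],E₁)`,
with derivative `u'` (taken in the ambient space `E₀ = E`). -/
def MemE1 (μ T : ℝ) (S₁ : Set E) (N₁ : E → ℝ) (u u' : ℝ → E) : Prop :=
  (∀ t ∈ Ioc (0:ℝ) T, HasDerivAt u (u' t) t) ∧
    MemBC μ T univ (fun x => ‖x‖) u ∧ MemBC μ T univ (fun x => ‖x‖) u' ∧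
    MemBC μ T S₁ N₁ u

/-- The norm of `𝔼_{1,μ}([0,T])`. -/
noncomputable def normE1 (μ T : ℝ) (N₁ : E → ℝ) (u u' : ℝ → E) : ℝ :=
  sSup ((fun t : ℝ => t ^ (1 - μ) * (‖u' t‖ + N₁ (u t))) '' Ioc 0 T)

/-- The norm of `𝔼_{0,μ}([0,T]) = BC_{1-μ}([0,T],E₀)`. -/
noncomputable def normE0 (μ T : ℝ) (u : ℝ → E) : ℝ :=
  sSup ((fun t : ℝ => t ^ (1 - μ) * ‖u t‖) '' Ioc 0 T)

/-- The norm of `C([0,T],X)` for the generalized norm `N`. -/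
noncomputable def normC (T : ℝ) (N : E → ℝ) (u : ℝ → E) : ℝ :=
  sSup ((fun t : ℝ => N (u t)) '' Icc 0 T)

/-- `(S, N)` is a Banach space continuously embedded in the ambient space `E`. -/
structure IsBanachIn (S : Set E) (N : E → ℝ) : Prop where
  subspace : ∃ p : Submodule ℝ E, S = (p : Set E)
  nonneg : ∀ x, 0 ≤ N x
  norm_zero : N 0 = 0
  add_le : ∀ x y, N (x + y) ≤ N x + N y
  smul_eq : ∀ (c : ℝ) (x : E), N (c • x) = |c| * N x
  eq_zero : ∀ x ∈ S, N x = 0 → x = 0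
  embed : ∃ C > 0, ∀ x ∈ S, ‖x‖ ≤ C * N x
  complete : ∀ f : ℕ → E, (∀ n, f n ∈ S) →
      (∀ ε > 0, ∃ n₀ : ℕ, ∀ p ≥ n₀, ∀ q ≥ n₀, N (f p - f q) < ε) →
      ∃ x ∈ S, ∀ ε > 0, ∃ n₀ : ℕ, ∀ n ≥ n₀, N (f n - x) < ε

/-- `V` is an open subset of the space with carrier `S` and norm `N`. -/
def NOpenIn (S : Set E) (N : E → ℝ) (V : Set E) : Prop :=
  V ⊆ S ∧ ∀ x ∈ V, ∃ ε > 0, ∀ y ∈ S, N (y - x) < ε → y ∈ V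

/-- The boundary of `V` in the space with carrier `S` and norm `N`. -/
def NBoundary (S : Set E) (N : E → ℝ) (V : Set E) : Set E :=
  {y | y ∈ S ∧ (∀ ε > 0, ∃ v ∈ V, N (v - y) < ε) ∧ y ∉ V}

/-- A solution on `[0,T]` of the linear Cauchy problem `u̇ + B u = f`, `u(0) = x`,
in the class `𝔼_{1,μ}([0,T])` (with trace space norm `Nμ`). -/
def IsLinSol (μ T : ℝ) (S₁ : Set E) (N₁ Nμ : E → ℝ) (B : E →ₗ[ℝ] E)
    (f : ℝ → E) (x : E) (u u' : ℝ → E) : Prop :=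
  MemE1 μ T S₁ N₁ u u' ∧ NContOn Nμ u (Icc 0 T) ∧ u 0 = x ∧
    ∀ t ∈ Ioc (0:ℝ) T, u' t + B (u t) = f t

/-- `B ∈ ℳ_μ(E₁, E₀)`: `B` is bounded from `E₁` to `E₀` and the pair
`(𝔼_{1,μ}, 𝔼_{0,μ})` is a pair of maximal regularity for `B`. -/
def MaxReg (μ : ℝ) (S₁ Sμ : Set E) (N₁ Nμ : E → ℝ) (B : E →ₗ[ℝ] E) : Prop :=
  (∃ C : ℝ, ∀ x ∈ S₁, ‖B x‖ ≤ C * N₁ x) ∧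
    ∀ T > 0, ∀ f : ℝ → E, MemBC μ T univ (fun x => ‖x‖) f → ∀ x ∈ Sμ,
      (∃ u u' : ℝ → E, IsLinSol μ T S₁ N₁ Nμ B f x u u') ∧
      ∀ u₁ u₁' u₂ u₂' : ℝ → E, IsLinSol μ T S₁ N₁ Nμ B f x u₁ u₁' →
        IsLinSol μ T S₁ N₁ Nμ B f x u₂ u₂' → ∀ t ∈ Icc (0:ℝ) T, u₁ t = u₂ t

/-- Hypothesis (H1): `A x ∈ ℳ_μ(E₁,E₀)` for `x ∈ V_μ` and `(A, F₁)` is locally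
Lipschitz from `V_μ` to `ℒ(E₁,E₀) × E₀`. -/
def HypH1 (μ : ℝ) (Vμ S₁ Sμ : Set E) (N₁ Nμ : E → ℝ)
    (A : E → E →ₗ[ℝ] E) (F₁ : E → E) : Prop :=
  (∀ x ∈ Vμ, MaxReg μ S₁ Sμ N₁ Nμ (A x)) ∧
    ∀ x₀ ∈ Vμ, ∃ r > 0, ∃ L > 0, ∀ x₁ ∈ Vμ, ∀ x₂ ∈ Vμ,
      Nμ (x₁ - x₀) ≤ r → Nμ (x₂ - x₀) ≤ r →
        (∀ z ∈ S₁, ‖A x₁ z - A x₂ z‖ ≤ L * Nμ (x₁ - x₂) * N₁ z) ∧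
        ‖F₁ x₁ - F₁ x₂‖ ≤ L * Nμ (x₁ - x₂)

/-- Hypothesis (H2): the structural condition on `F₂ : V_μ ∩ E_β → E₀`. -/
def HypH2 (μ β : ℝ) (Vμ Sβ : Set E) (Nμ Nβ : E → ℝ) (m : ℕ)
    (βj ρj : Fin m → ℝ) (Nbj : Fin m → E → ℝ) (F₂ : E → E) : Prop :=
  β ∈ Ioo μ 1 ∧ (∀ j, βj j ∈ Icc μ β) ∧ (∀ j, 0 ≤ ρj j) ∧
    (∀ j, (ρj j * (β - μ) + (βj j - μ)) / (1 - μ) ≤ 1) ∧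
    ∀ x₀ ∈ Vμ, ∀ R > 0, ∃ C > 0, ∀ x₁ ∈ Vμ ∩ Sβ, ∀ x₂ ∈ Vμ ∩ Sβ,
      Nμ (x₁ - x₀) ≤ R → Nμ (x₂ - x₀) ≤ R →
      ‖F₂ x₁ - F₂ x₂‖ ≤ C * ∑ j, (1 + Nβ x₁ ^ ρj j + Nβ x₂ ^ ρj j) * Nbj j (x₁ - x₂)

/-- Structural facts about the continuous interpolation scale
`E₁ ⊆ E_β ⊆ E_{β_j} ⊆ E_μ ⊆ E₀` (all true of `E_θ = (E₀,E₁)⁰_{θ,∞}`). -/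
structure ScaleSetting (μ β : ℝ) (S₁ Sμ Sβ : Set E) (N₁ Nμ Nβ : E → ℝ) (m : ℕ)
    (βj : Fin m → ℝ) (Sbj : Fin m → Set E) (Nbj : Fin m → E → ℝ) : Prop where
  banach₁ : IsBanachIn S₁ N₁
  banachμ : IsBanachIn Sμ Nμ
  banachβ : IsBanachIn Sβ Nβ
  banachbj : ∀ j, IsBanachIn (Sbj j) (Nbj j)
  incl₁β : S₁ ⊆ Sβ
  inclβbj : ∀ j, Sβ ⊆ Sbj j
  inclbjμ : ∀ j, Sbj j ⊆ Sμ
  dense₁₀ : ∀ x : E, ∀ ε > 0, ∃ y ∈ S₁, ‖x - y‖ < ε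
  dense₁μ : ∀ x ∈ Sμ, ∀ ε > 0, ∃ y ∈ S₁, Nμ (x - y) < ε
  embedβ₁ : ∃ C > 0, ∀ x ∈ S₁, Nβ x ≤ C * N₁ x
  embedbjβ : ∀ j, ∃ C > 0, ∀ x ∈ Sβ, Nbj j x ≤ C * Nβ x
  embedμbj : ∀ j, ∃ C > 0, ∀ x ∈ Sbj j, Nμ x ≤ C * Nbj j x
  interpβ : ∃ c ≥ 1, ∀ x ∈ S₁,
      Nβ x ≤ c * Nμ x ^ (1 - (β - μ) / (1 - μ)) * N₁ x ^ ((β - μ) / (1 - μ))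
  interpbj : ∀ j, ∃ c ≥ 1, ∀ x ∈ S₁,
      Nbj j x ≤ c * Nμ x ^ (1 - (βj j - μ) / (1 - μ)) * N₁ x ^ ((βj j - μ) / (1 - μ))

/-- A solution of the quasilinear problem (QE) on `[0,T]`, in the class
`𝔼_{1,ν}([0,T])` with trace space norm `Nν`. -/
def IsQSol (ν T : ℝ) (Vμ S₁ : Set E) (N₁ Nν : E → ℝ)
    (A : E → E →ₗ[ℝ] E) (F₁ F₂ : E → E) (x : E) (u u' : ℝ → E) : Prop :=
  MemE1 ν T S₁ N₁ u u' ∧ NContOn Nν u (Icc 0 T) ∧ u 0 = x ∧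
    (∀ t ∈ Icc (0:ℝ) T, u t ∈ Vμ) ∧
    ∀ t ∈ Ioc (0:ℝ) T, u' t + A (u t) (u t) = F₁ (u t) + F₂ (u t)

/-- A maximal solution of (QE), defined on the maximal right-open interval
`[0, tp)` with `tp ∈ (0,∞]`. -/
def IsMaxSol (μ : ℝ) (Vμ S₁ : Set E) (N₁ Nμ : E → ℝ)
    (A : E → E →ₗ[ℝ] E) (F₁ F₂ : E → E) (x : E) (u u' : ℝ → E) (tp : ℝ≥0∞) : Prop :=
  0 < tp ∧
    (∀ T : ℝ, 0 < T → ENNReal.ofReal T < tp →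
      IsQSol μ T Vμ S₁ N₁ Nμ A F₁ F₂ x u u') ∧
    ∀ T : ℝ, 0 < T → ∀ v v' : ℝ → E, IsQSol μ T Vμ S₁ N₁ Nμ A F₁ F₂ x v v' →
      ENNReal.ofReal T < tp ∧ ∀ t ∈ Icc (0:ℝ) T, v t = u t

/-- `ustar` is a stable equilibrium of (QE) in the topology of the space
with carrier `Sν` and norm `Nν`. -/
def StableIn (μ : ℝ) (Vμ S₁ Sν : Set E) (N₁ Nμ Nν : E → ℝ)
    (A : E → E →ₗ[ℝ] E) (F₁ F₂ : E → E) (ustar : E) : Prop :=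
  ∀ ε > 0, ∃ δ > 0, ∀ x₀ ∈ Vμ ∩ Sν, Nν (x₀ - ustar) < δ →
    ∀ (u u' : ℝ → E) (tp : ℝ≥0∞), IsMaxSol μ Vμ S₁ N₁ Nμ A F₁ F₂ x₀ u u' tp →
      tp = ⊤ ∧ ∀ t : ℝ, 0 ≤ t → Nν (u t - ustar) < ε


private lemma aux_rpow_add_le (a b p : ℝ) (ha : 0 ≤ a) (hb : 0 ≤ b) (hp : 0 ≤ p) (hp1 : p ≤ 1) :
    (a + b) ^ p ≤ a ^ p + b ^ p := by
  have h := NNReal.rpow_add_le_add_rpow a.toNNReal b.toNNReal hp hp1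
  have h2 := NNReal.coe_le_coe.mpr h
  simpa [NNReal.coe_rpow, Real.coe_toNNReal a ha, Real.coe_toNNReal b hb,
    ← Real.toNNReal_add ha hb, max_eq_left (add_nonneg ha hb)] using h2

private lemma aux_interp_max (x X ε f : ℝ) (hx : 0 < x) (hxX : x ≤ X) (hε : 0 ≤ ε)
    (hf : 0 ≤ f) (hf1 : f ≤ 1) : ε ^ f * x ^ (1 - f) ≤ max X ε := by
  have hm : 0 < max X ε := lt_of_lt_of_le hx (le_trans hxX (le_max_left _ _))
  calc ε ^ f * x ^ (1 - f) ≤ (max X ε) ^ f * (max X ε) ^ (1 - f) := by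
        apply mul_le_mul (Real.rpow_le_rpow hε (le_max_right _ _) hf)
          (Real.rpow_le_rpow hx.le (le_trans hxX (le_max_left _ _)) (by linarith))
          (Real.rpow_nonneg hx.le _) (Real.rpow_nonneg hm.le _)
    _ = max X ε := by
        rw [← Real.rpow_add hm]; simp

private lemma aux_mul_inv_rpow (ε x s : ℝ) (hε : 0 ≤ ε) (hx : 0 < x) :
    (ε * x⁻¹) ^ s = ε ^ s * x ^ (-s) := by
  rw [Real.mul_rpow hε (inv_nonneg.2 hx.le), Real.inv_rpow hx.le, ← Real.rpow_neg hx.le]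

private lemma aux_rpow_prod (ε x s ρ : ℝ) (hε : 0 ≤ ε) (hx : 0 ≤ x) :
    (ε ^ s * x ^ (-s)) ^ ρ = ε ^ (s * ρ) * x ^ (-(s * ρ)) := by
  rw [Real.mul_rpow (Real.rpow_nonneg hε _) (Real.rpow_nonneg hx _),
    Real.rpow_mul hε, show -(s * ρ) = -s * ρ by ring, Real.rpow_mul hx]

private lemma aux_j (A₁ A₂ B₁ B₂ q r x X ε : ℝ)
    (hA₁ : 0 ≤ A₁) (hA₂ : 0 ≤ A₂) (hB₁ : 0 ≤ B₁) (hB₂ : 0 ≤ B₂)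
    (hq : 0 ≤ q) (hr : 0 ≤ r) (hqr : q + r ≤ 1)
    (hx : 0 < x) (hX : x ≤ X) (hε : 0 < ε) :
    x * ((1 + A₁ * (ε ^ q * x ^ (-q)) + A₂) * (B₁ * (ε ^ r * x ^ (-r)) + B₂)) ≤
      (1 + A₁ + A₂) * (B₁ + B₂) * max X ε := by
  have hu : 0 ≤ ε ^ q * x ^ (-q) :=
    mul_nonneg (Real.rpow_nonneg hε.le _) (Real.rpow_nonneg hx.le _)
  have hw : 0 ≤ ε ^ r * x ^ (-r) :=
    mul_nonneg (Real.rpow_nonneg hε.le _) (Real.rpow_nonneg hx.le _)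
  have m2 : x ≤ max X ε := le_trans hX (le_max_left _ _)
  have m1 : (ε ^ r * x ^ (-r)) * x ≤ max X ε := by
    calc (ε ^ r * x ^ (-r)) * x = ε ^ r * x ^ (1 - r) := by
          rw [show (1:ℝ) - r = -r + 1 by ring, Real.rpow_add hx, Real.rpow_one]; ring
      _ ≤ _ := aux_interp_max x X ε r hx hX hε.le hr (by linarith)
  have m4 : (ε ^ q * x ^ (-q)) * x ≤ max X ε := by
    calc (ε ^ q * x ^ (-q)) * x = ε ^ q * x ^ (1 - q) := by
          rw [show (1:ℝ) - q = -q + 1 by ring, Real.rpow_add hx, Real.rpow_one]; ring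
      _ ≤ _ := aux_interp_max x X ε q hx hX hε.le hq (by linarith)
  have m3 : (ε ^ q * x ^ (-q)) * ((ε ^ r * x ^ (-r)) * x) ≤ max X ε := by
    calc (ε ^ q * x ^ (-q)) * ((ε ^ r * x ^ (-r)) * x) = ε ^ (q + r) * x ^ (1 - (q + r)) := by
          rw [Real.rpow_add hε, show (1:ℝ) - (q + r) = -q + (-r + 1) by ring,
            Real.rpow_add hx, Real.rpow_add hx, Real.rpow_one]; ring
      _ ≤ _ := aux_interp_max x X ε (q + r) hx hX hε.le (by linarith) hqr
  have h1 : (1 + A₂) * B₁ * ((ε ^ r * x ^ (-r)) * x) ≤ (1 + A₂) * B₁ * max X ε :=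
    mul_le_mul_of_nonneg_left m1 (mul_nonneg (by linarith) hB₁)
  have h2 : (1 + A₂) * B₂ * x ≤ (1 + A₂) * B₂ * max X ε :=
    mul_le_mul_of_nonneg_left m2 (mul_nonneg (by linarith) hB₂)
  have h3 : A₁ * B₁ * ((ε ^ q * x ^ (-q)) * ((ε ^ r * x ^ (-r)) * x)) ≤ A₁ * B₁ * max X ε :=
    mul_le_mul_of_nonneg_left m3 (mul_nonneg hA₁ hB₁)
  have h4 : A₁ * B₂ * ((ε ^ q * x ^ (-q)) * x) ≤ A₁ * B₂ * max X ε :=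
    mul_le_mul_of_nonneg_left m4 (mul_nonneg hA₁ hB₂)
  nlinarith [h1, h2, h3, h4]
set_option maxHeartbeats 1600000 in
/-- **Claim 2 in the proof of Theorem 2.2** (the part concerning `F₂`): for
`v ∈ 𝔼_{1,μ}([0,T])` with values in `B̄_{E_μ}(x₀,ε₀) ⊆ V_μ`, the composition
`F₂ ∘ v` is continuous into `E₀` on `(0,T]`, belongs to `𝔼_{0,μ}([0,T])`, and
its `𝔼_{0,μ}([0,T'])`-norm tends to `0` as `T' → 0⁺`. -/
theorem F₂_composition
    {E : Type*} [NormedAddCommGroup E] [NormedSpace ℝ E] [CompleteSpace E]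
    (μ β : ℝ) (hμ : μ ∈ Ioo (0:ℝ) 1)
    (S₁ Sμ Sβ Vμ : Set E) (N₁ Nμ Nβ : E → ℝ) (m : ℕ)
    (βj ρj : Fin m → ℝ) (Sbj : Fin m → Set E) (Nbj : Fin m → E → ℝ)
    (F₂ : E → E)
    (hscale : ScaleSetting μ β S₁ Sμ Sβ N₁ Nμ Nβ m βj Sbj Nbj)
    (hopen : NOpenIn Sμ Nμ Vμ)
    (hH2 : HypH2 μ β Vμ Sβ Nμ Nβ m βj ρj Nbj F₂)
    (x₀ : E) (hx₀ : x₀ ∈ Vμ) (ε₀ : ℝ) (hε₀ : 0 < ε₀)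
    (hball : ∀ y ∈ Sμ, Nμ (y - x₀) ≤ ε₀ → y ∈ Vμ)
    (T : ℝ) (hT : 0 < T) (v v' : ℝ → E)
    (hv : MemE1 μ T S₁ N₁ v v')
    (hvball : ∀ t ∈ Icc (0:ℝ) T, v t ∈ Sμ ∧ Nμ (v t - x₀) ≤ ε₀) :
    -- (a) `t ↦ F₂(v(t))` is continuous from `(0,T]` into `E₀`
    NContOn (fun x => ‖x‖) (fun t => F₂ (v t)) (Ioc 0 T) ∧
    -- (b) `F₂ ∘ v ∈ 𝔼_{0,μ}([0,T]) = BC_{1-μ}([0,T],E₀)`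
    MemBC μ T univ (fun x => ‖x‖) (fun t => F₂ (v t)) ∧
    -- (c) `‖F₂ ∘ v‖_{𝔼_{0,μ}([0,T'])} → 0` as `T' → 0⁺`
    Tendsto (fun T' : ℝ => normE0 μ T' (fun t => F₂ (v t)))
      (nhdsWithin 0 (Ioi 0)) (nhds 0) := by
  obtain ⟨hμ0, hμ1⟩ := hμ
  have h1μ : 0 < 1 - μ := by linarith
  obtain ⟨⟨hβμ, hβ1⟩, hβj, hρj, hsum, hLipAll⟩ := hH2
  obtain ⟨C, hC0, hLip⟩ := hLipAll x₀ hx₀ ε₀ hε₀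
  obtain ⟨hderiv, hbc0, hbc0', hmemS₁, hcont1, ⟨M₀, hM₀⟩, htend1⟩ := hv
  have hN₁n := hscale.banach₁.nonneg
  have hNμn := hscale.banachμ.nonneg
  have hNβn := hscale.banachβ.nonneg
  have hNbn : ∀ j, ∀ z : E, 0 ≤ Nbj j z := fun j => (hscale.banachbj j).nonneg
  have hN₁add := hscale.banach₁.add_le
  have hNμadd := hscale.banachμ.add_le
  have hNμneg : ∀ z : E, Nμ (-z) = Nμ z := by
    intro z; simpa using hscale.banachμ.smul_eq (-1) z
  have hN₁neg : ∀ z : E, N₁ (-z) = N₁ z := by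
    intro z; simpa using hscale.banach₁.smul_eq (-1) z
  obtain ⟨p₁, hp₁S⟩ := hscale.banach₁.subspace
  have hsubmem : ∀ y z : E, y ∈ S₁ → z ∈ S₁ → y - z ∈ S₁ := by
    intro y z hy hz
    rw [hp₁S] at hy hz ⊢
    exact sub_mem hy hz
  set M := max M₀ 1 with hMdef
  have hMpos : 0 < M := lt_of_lt_of_le one_pos (le_max_right _ _)
  have hM : ∀ t ∈ Ioc (0:ℝ) T, t ^ (1 - μ) * N₁ (v t) ≤ M :=
    fun t ht => le_trans (hM₀ t ht) (le_max_left _ _)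
  set P := Nμ x₀ + ε₀ with hPdef
  have hPpos : 0 < P := add_pos_of_nonneg_of_pos (hNμn x₀) hε₀
  have hNμv : ∀ t ∈ Icc (0:ℝ) T, Nμ (v t) ≤ P := by
    intro t ht
    have h1 : Nμ (v t) ≤ Nμ (v t - x₀) + Nμ x₀ := by
      calc Nμ (v t) = Nμ (v t - x₀ + x₀) := by rw [sub_add_cancel]
        _ ≤ _ := hNμadd _ _
    have h2 := (hvball t ht).2
    rw [hPdef]; linarith
  have hNμdiff : ∀ t ∈ Icc (0:ℝ) T, ∀ s ∈ Icc (0:ℝ) T, Nμ (v t - v s) ≤ 2 * P := by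
    intro t ht s hs
    have h1 : Nμ (v t - v s) ≤ Nμ (v t - x₀) + Nμ (v s - x₀) := by
      calc Nμ (v t - v s) = Nμ ((v t - x₀) + -(v s - x₀)) := by congr 1; abel
        _ ≤ Nμ (v t - x₀) + Nμ (-(v s - x₀)) := hNμadd _ _
        _ = _ := by rw [hNμneg]
    have h2 := (hvball t ht).2
    have h3 := (hvball s hs).2
    have h4 : (0:ℝ) ≤ Nμ x₀ := hNμn x₀
    rw [hPdef] at *; linarith
  have hVμv : ∀ t ∈ Icc (0:ℝ) T, v t ∈ Vμ :=
    fun t ht => hball _ (hvball t ht).1 (hvball t ht).2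
  have hVβ : ∀ t ∈ Ioc (0:ℝ) T, v t ∈ Vμ ∩ Sβ := fun t ht =>
    ⟨hVμv t (Ioc_subset_Icc_self ht), hscale.incl₁β (hmemS₁ t ht)⟩
  obtain ⟨c, hc1, hcI⟩ := hscale.interpβ
  choose cj hcj1 hcjI using hscale.interpbj
  obtain ⟨Cβ, hCβ0, hCβ⟩ := hscale.embedβ₁
  choose CB hCB0 hCB using hscale.embedbjβ
  set α := (β - μ) / (1 - μ) with hαdef
  have hα0 : 0 ≤ α := div_nonneg (by linarith) h1μ.le
  have hα1 : α < 1 := by rw [hαdef, div_lt_one h1μ]; linarith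
  have haj0 : ∀ j, 0 ≤ (βj j - μ) / (1 - μ) :=
    fun j => div_nonneg (by linarith [(hβj j).1]) h1μ.le
  have haj1 : ∀ j, (βj j - μ) / (1 - μ) ≤ 1 := by
    intro j
    rw [div_le_one h1μ]
    have := (hβj j).2; linarith
  have hqr : ∀ j, α * ρj j + (βj j - μ) / (1 - μ) ≤ 1 := by
    intro j
    have heq : α * ρj j + (βj j - μ) / (1 - μ) = (ρj j * (β - μ) + (βj j - μ)) / (1 - μ) := by
      rw [hαdef]; field_simp
    rw [heq]; exact hsum j
  have hTIoc : T ∈ Ioc (0:ℝ) T := ⟨hT, le_rfl⟩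
  have hFdiff : ∀ t ∈ Ioc (0:ℝ) T, ∀ s ∈ Ioc (0:ℝ) T,
      ‖F₂ (v t) - F₂ (v s)‖ ≤
        C * ∑ j, (1 + Nβ (v t) ^ ρj j + Nβ (v s) ^ ρj j) * Nbj j (v t - v s) :=
    fun t ht s hs => hLip (v t) (hVβ t ht) (v s) (hVβ s hs)
      (hvball t (Ioc_subset_Icc_self ht)).2 (hvball s (Ioc_subset_Icc_self hs)).2
  -- Part (a): continuity
  have hcontF : NContOn (fun x : E => ‖x‖) (fun t => F₂ (v t)) (Ioc 0 T) := by
    intro t ht ε hε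
    set D := C * ∑ j, (1 + 2 * (Cβ * (N₁ (v t) + 1)) ^ ρj j) * (CB j * Cβ) with hDdef
    have hKn : 0 ≤ Cβ * (N₁ (v t) + 1) := mul_nonneg hCβ0.le (by linarith [hN₁n (v t)])
    have hDsum : ∀ j ∈ Finset.univ,
        (0:ℝ) ≤ (1 + 2 * (Cβ * (N₁ (v t) + 1)) ^ ρj j) * (CB j * Cβ) := by
      intro j _
      have h1 : (0:ℝ) ≤ (Cβ * (N₁ (v t) + 1)) ^ ρj j := Real.rpow_nonneg hKn _
      exact mul_nonneg (by linarith) (mul_nonneg (hCB0 j).le hCβ0.le)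
    have hD0 : 0 ≤ D := mul_nonneg hC0.le (Finset.sum_nonneg hDsum)
    have hε' : 0 < min 1 (ε / (D + 1)) := lt_min one_pos (div_pos hε (by linarith))
    obtain ⟨δ, hδ0, hδ⟩ := hcont1 t ht (min 1 (ε / (D + 1))) hε'
    refine ⟨δ, hδ0, fun t' ht' hlt => ?_⟩
    have hN := hδ t' ht' hlt
    have hNd0 : 0 ≤ N₁ (v t' - v t) := hN₁n _
    have hmem' := hmemS₁ t' ht'
    have hmemt := hmemS₁ t ht
    have hzS₁ : v t' - v t ∈ S₁ := hsubmem _ _ hmem' hmemt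
    have hN₁t' : N₁ (v t') ≤ N₁ (v t) + 1 := by
      have h1 : N₁ (v t') ≤ N₁ (v t' - v t) + N₁ (v t) := by
        calc N₁ (v t') = N₁ (v t' - v t + v t) := by rw [sub_add_cancel]
          _ ≤ _ := hN₁add _ _
      have h2 : N₁ (v t' - v t) < 1 := lt_of_lt_of_le hN (min_le_left _ _)
      linarith
    have hβ' : Nβ (v t') ≤ Cβ * (N₁ (v t) + 1) := by
      calc Nβ (v t') ≤ Cβ * N₁ (v t') := hCβ _ hmem'
        _ ≤ _ := mul_le_mul_of_nonneg_left hN₁t' hCβ0.le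
    have hβt : Nβ (v t) ≤ Cβ * (N₁ (v t) + 1) := by
      calc Nβ (v t) ≤ Cβ * N₁ (v t) := hCβ _ hmemt
        _ ≤ _ := mul_le_mul_of_nonneg_left (by linarith) hCβ0.le
    have hterm : ∀ j ∈ Finset.univ,
        (1 + Nβ (v t') ^ ρj j + Nβ (v t) ^ ρj j) * Nbj j (v t' - v t) ≤
          ((1 + 2 * (Cβ * (N₁ (v t) + 1)) ^ ρj j) * (CB j * Cβ)) * N₁ (v t' - v t) := by
      intro j _
      have h1 : Nβ (v t') ^ ρj j ≤ (Cβ * (N₁ (v t) + 1)) ^ ρj j :=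
        Real.rpow_le_rpow (hNβn _) hβ' (hρj j)
      have h2 : Nβ (v t) ^ ρj j ≤ (Cβ * (N₁ (v t) + 1)) ^ ρj j :=
        Real.rpow_le_rpow (hNβn _) hβt (hρj j)
      have h3 : Nbj j (v t' - v t) ≤ CB j * Cβ * N₁ (v t' - v t) := by
        calc Nbj j (v t' - v t) ≤ CB j * Nβ (v t' - v t) := hCB j _ (hscale.incl₁β hzS₁)
          _ ≤ CB j * (Cβ * N₁ (v t' - v t)) :=
              mul_le_mul_of_nonneg_left (hCβ _ hzS₁) (hCB0 j).le
          _ = _ := by ring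
      have h4 : 0 ≤ Nbj j (v t' - v t) := hNbn j _
      have h5 : (0:ℝ) ≤ (Cβ * (N₁ (v t) + 1)) ^ ρj j := Real.rpow_nonneg hKn _
      calc (1 + Nβ (v t') ^ ρj j + Nβ (v t) ^ ρj j) * Nbj j (v t' - v t)
          ≤ (1 + 2 * (Cβ * (N₁ (v t) + 1)) ^ ρj j) * (CB j * Cβ * N₁ (v t' - v t)) :=
            mul_le_mul (by linarith) h3 h4 (by linarith)
        _ = _ := by ring
    have hbig : ‖F₂ (v t') - F₂ (v t)‖ ≤ D * N₁ (v t' - v t) := by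
      calc ‖F₂ (v t') - F₂ (v t)‖
          ≤ C * ∑ j, (1 + Nβ (v t') ^ ρj j + Nβ (v t) ^ ρj j) * Nbj j (v t' - v t) :=
            hFdiff t' ht' t ht
        _ ≤ C * ∑ j, ((1 + 2 * (Cβ * (N₁ (v t) + 1)) ^ ρj j) * (CB j * Cβ)) * N₁ (v t' - v t) :=
            mul_le_mul_of_nonneg_left (Finset.sum_le_sum hterm) hC0.le
        _ = D * N₁ (v t' - v t) := by rw [← Finset.sum_mul, hDdef]; ring
    have hfin : D * N₁ (v t' - v t) < ε := by
      have h6 : N₁ (v t' - v t) ≤ ε / (D + 1) := le_of_lt (lt_of_lt_of_le hN (min_le_right _ _))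
      have h7 : D * N₁ (v t' - v t) ≤ D * (ε / (D + 1)) := mul_le_mul_of_nonneg_left h6 hD0
      have h8 : D * (ε / (D + 1)) < ε := by
        rw [mul_comm, div_mul_eq_mul_div, div_lt_iff₀ (by linarith : (0:ℝ) < D + 1)]
        nlinarith
      linarith
    exact lt_of_le_of_lt hbig hfin
  -- constants for the key estimate
  set XT := T ^ (1 - μ) with hXTdef
  have hXTpos : 0 < XT := Real.rpow_pos_of_pos hT _
  set Q := c * P ^ (1 - α) with hQdef
  have hQ0 : 0 ≤ Q := mul_nonneg (by linarith) (Real.rpow_nonneg hPpos.le _)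
  set K := C * ∑ j, (1 + Q ^ ρj j + Nβ (v T) ^ ρj j) *
      (cj j * (2 * P) ^ (1 - (βj j - μ) / (1 - μ)) +
        cj j * (2 * P) ^ (1 - (βj j - μ) / (1 - μ)) * (M * XT⁻¹) ^ ((βj j - μ) / (1 - μ)))
    with hKdef
  have hKsum0 : ∀ j ∈ Finset.univ, (0:ℝ) ≤ (1 + Q ^ ρj j + Nβ (v T) ^ ρj j) *
      (cj j * (2 * P) ^ (1 - (βj j - μ) / (1 - μ)) +
        cj j * (2 * P) ^ (1 - (βj j - μ) / (1 - μ)) * (M * XT⁻¹) ^ ((βj j - μ) / (1 - μ))) := by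
    intro j _
    have h1 : (0:ℝ) ≤ Q ^ ρj j := Real.rpow_nonneg hQ0 _
    have h2 : (0:ℝ) ≤ Nβ (v T) ^ ρj j := Real.rpow_nonneg (hNβn _) _
    have h3 : (0:ℝ) ≤ cj j * (2 * P) ^ (1 - (βj j - μ) / (1 - μ)) :=
      mul_nonneg (by linarith [hcj1 j]) (Real.rpow_nonneg (by linarith) _)
    have h4 : (0:ℝ) ≤ (M * XT⁻¹) ^ ((βj j - μ) / (1 - μ)) :=
      Real.rpow_nonneg (mul_nonneg hMpos.le (inv_nonneg.2 hXTpos.le)) _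
    exact mul_nonneg (by linarith) (add_nonneg h3 (mul_nonneg h3 h4))
  have hK0 : 0 ≤ K := mul_nonneg hC0.le (Finset.sum_nonneg hKsum0)
  -- the key estimate
  have key : ∀ δ : ℝ, 0 < δ → δ ≤ T → ∀ ε : ℝ, 0 < ε →
      (∀ r ∈ Ioc (0:ℝ) δ, r ^ (1 - μ) * N₁ (v r) ≤ ε) →
      ∀ t ∈ Ioc (0:ℝ) δ, t ^ (1 - μ) * ‖F₂ (v t)‖ ≤
        δ ^ (1 - μ) * ‖F₂ (v T)‖ + K * max (δ ^ (1 - μ)) ε := by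
    intro δ hδ0 hδT ε hε hφ t ht
    obtain ⟨ht0, htδ⟩ := ht
    have htT : t ∈ Ioc (0:ℝ) T := ⟨ht0, htδ.trans hδT⟩
    have hx : 0 < t ^ (1 - μ) := Real.rpow_pos_of_pos ht0 _
    have hxX : t ^ (1 - μ) ≤ δ ^ (1 - μ) := Real.rpow_le_rpow ht0.le htδ h1μ.le
    have hN₁t : N₁ (v t) ≤ ε * (t ^ (1 - μ))⁻¹ := by
      have h := hφ t ⟨ht0, htδ⟩
      have h2 : N₁ (v t) ≤ ε / t ^ (1 - μ) := by
        rw [le_div_iff₀ hx]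
        calc N₁ (v t) * t ^ (1 - μ) = t ^ (1 - μ) * N₁ (v t) := by ring
          _ ≤ ε := h
      rwa [div_eq_mul_inv] at h2
    have hN₁T : N₁ (v T) ≤ M * XT⁻¹ := by
      have h := hM T hTIoc
      rw [← hXTdef] at h
      have h2 : N₁ (v T) ≤ M / XT := by
        rw [le_div_iff₀ hXTpos]
        calc N₁ (v T) * XT = XT * N₁ (v T) := by ring
          _ ≤ M := h
      rwa [div_eq_mul_inv] at h2
    have hβt : Nβ (v t) ≤ Q * (ε ^ α * (t ^ (1 - μ)) ^ (-α)) := by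
      have h2 : Nμ (v t) ^ (1 - α) ≤ P ^ (1 - α) :=
        Real.rpow_le_rpow (hNμn _) (hNμv t (Ioc_subset_Icc_self htT)) (by linarith)
      have h3 : N₁ (v t) ^ α ≤ (ε * (t ^ (1 - μ))⁻¹) ^ α :=
        Real.rpow_le_rpow (hN₁n _) hN₁t hα0
      calc Nβ (v t) ≤ c * Nμ (v t) ^ (1 - α) * N₁ (v t) ^ α := hcI _ (hmemS₁ t htT)
        _ ≤ c * P ^ (1 - α) * (ε * (t ^ (1 - μ))⁻¹) ^ α := by
            apply mul_le_mul
              (mul_le_mul le_rfl h2 (Real.rpow_nonneg (hNμn _) _) (by linarith))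
              h3 (Real.rpow_nonneg (hN₁n _) _)
              (mul_nonneg (by linarith) (Real.rpow_nonneg hPpos.le _))
        _ = Q * (ε ^ α * (t ^ (1 - μ)) ^ (-α)) := by
            rw [hQdef, aux_mul_inv_rpow ε (t ^ (1 - μ)) α hε.le hx]
    have hA : ∀ j, Nβ (v t) ^ ρj j ≤
        Q ^ ρj j * (ε ^ (α * ρj j) * (t ^ (1 - μ)) ^ (-(α * ρj j))) := by
      intro j
      calc Nβ (v t) ^ ρj j ≤ (Q * (ε ^ α * (t ^ (1 - μ)) ^ (-α))) ^ ρj j :=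
            Real.rpow_le_rpow (hNβn _) hβt (hρj j)
        _ = _ := by
            rw [Real.mul_rpow hQ0
                (mul_nonneg (Real.rpow_nonneg hε.le _) (Real.rpow_nonneg hx.le _)),
              aux_rpow_prod ε (t ^ (1 - μ)) α (ρj j) hε.le hx.le]
    have hB : ∀ j, Nbj j (v t - v T) ≤
        cj j * (2 * P) ^ (1 - (βj j - μ) / (1 - μ)) *
            (ε ^ ((βj j - μ) / (1 - μ)) * (t ^ (1 - μ)) ^ (-((βj j - μ) / (1 - μ)))) +
          cj j * (2 * P) ^ (1 - (βj j - μ) / (1 - μ)) * (M * XT⁻¹) ^ ((βj j - μ) / (1 - μ)) := by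
      intro j
      have hzS₁ : v t - v T ∈ S₁ := hsubmem _ _ (hmemS₁ t htT) (hmemS₁ T hTIoc)
      have hN₁z : N₁ (v t - v T) ≤ ε * (t ^ (1 - μ))⁻¹ + M * XT⁻¹ := by
        have h1 : N₁ (v t - v T) ≤ N₁ (v t) + N₁ (v T) := by
          calc N₁ (v t - v T) = N₁ (v t + -(v T)) := by rw [sub_eq_add_neg]
            _ ≤ N₁ (v t) + N₁ (-(v T)) := hN₁add _ _
            _ = _ := by rw [hN₁neg]
        linarith
      have hNμz : Nμ (v t - v T) ≤ 2 * P :=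
        hNμdiff t (Ioc_subset_Icc_self htT) T (Ioc_subset_Icc_self hTIoc)
      have hc0j : (0:ℝ) ≤ cj j := by linarith [hcj1 j]
      calc Nbj j (v t - v T)
          ≤ cj j * Nμ (v t - v T) ^ (1 - (βj j - μ) / (1 - μ)) *
              N₁ (v t - v T) ^ ((βj j - μ) / (1 - μ)) := hcjI j _ hzS₁
        _ ≤ cj j * (2 * P) ^ (1 - (βj j - μ) / (1 - μ)) *
              (ε * (t ^ (1 - μ))⁻¹ + M * XT⁻¹) ^ ((βj j - μ) / (1 - μ)) := by
            apply mul_le_mul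
              (mul_le_mul le_rfl
                (Real.rpow_le_rpow (hNμn _) hNμz (by linarith [haj1 j]))
                (Real.rpow_nonneg (hNμn _) _) hc0j)
              (Real.rpow_le_rpow (hN₁n _) hN₁z (haj0 j))
              (Real.rpow_nonneg (hN₁n _) _)
              (mul_nonneg hc0j (Real.rpow_nonneg (by linarith) _))
        _ ≤ cj j * (2 * P) ^ (1 - (βj j - μ) / (1 - μ)) *
              ((ε * (t ^ (1 - μ))⁻¹) ^ ((βj j - μ) / (1 - μ)) +
                (M * XT⁻¹) ^ ((βj j - μ) / (1 - μ))) := by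
            apply mul_le_mul_of_nonneg_left
              (aux_rpow_add_le _ _ _ (mul_nonneg hε.le (inv_nonneg.2 hx.le))
                (mul_nonneg hMpos.le (inv_nonneg.2 hXTpos.le)) (haj0 j) (haj1 j))
              (mul_nonneg hc0j (Real.rpow_nonneg (by linarith) _))
        _ = _ := by rw [aux_mul_inv_rpow ε (t ^ (1 - μ)) _ hε.le hx]; ring
    have hterm : ∀ j ∈ Finset.univ,
        t ^ (1 - μ) * ((1 + Nβ (v t) ^ ρj j + Nβ (v T) ^ ρj j) * Nbj j (v t - v T)) ≤
          ((1 + Q ^ ρj j + Nβ (v T) ^ ρj j) *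
            (cj j * (2 * P) ^ (1 - (βj j - μ) / (1 - μ)) +
              cj j * (2 * P) ^ (1 - (βj j - μ) / (1 - μ)) * (M * XT⁻¹) ^ ((βj j - μ) / (1 - μ)))) *
          max (δ ^ (1 - μ)) ε := by
      intro j _
      have hA₁0 : (0:ℝ) ≤ Q ^ ρj j := Real.rpow_nonneg hQ0 _
      have hA₂0 : (0:ℝ) ≤ Nβ (v T) ^ ρj j := Real.rpow_nonneg (hNβn _) _
      have hB₁0 : (0:ℝ) ≤ cj j * (2 * P) ^ (1 - (βj j - μ) / (1 - μ)) :=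
        mul_nonneg (by linarith [hcj1 j]) (Real.rpow_nonneg (by linarith) _)
      have hB₂0 : (0:ℝ) ≤ cj j * (2 * P) ^ (1 - (βj j - μ) / (1 - μ)) *
          (M * XT⁻¹) ^ ((βj j - μ) / (1 - μ)) :=
        mul_nonneg hB₁0 (Real.rpow_nonneg (mul_nonneg hMpos.le (inv_nonneg.2 hXTpos.le)) _)
      have hu0 : (0:ℝ) ≤ ε ^ (α * ρj j) * (t ^ (1 - μ)) ^ (-(α * ρj j)) :=
        mul_nonneg (Real.rpow_nonneg hε.le _) (Real.rpow_nonneg hx.le _)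
      have hstep1 : (1 + Nβ (v t) ^ ρj j + Nβ (v T) ^ ρj j) * Nbj j (v t - v T) ≤
          (1 + Q ^ ρj j * (ε ^ (α * ρj j) * (t ^ (1 - μ)) ^ (-(α * ρj j))) + Nβ (v T) ^ ρj j) *
          (cj j * (2 * P) ^ (1 - (βj j - μ) / (1 - μ)) *
              (ε ^ ((βj j - μ) / (1 - μ)) * (t ^ (1 - μ)) ^ (-((βj j - μ) / (1 - μ)))) +
            cj j * (2 * P) ^ (1 - (βj j - μ) / (1 - μ)) *
              (M * XT⁻¹) ^ ((βj j - μ) / (1 - μ))) := by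
        apply mul_le_mul (by linarith [hA j]) (hB j) (hNbn j _)
          (by nlinarith [mul_nonneg hA₁0 hu0])
      have hstep2 := aux_j (Q ^ ρj j) (Nβ (v T) ^ ρj j)
        (cj j * (2 * P) ^ (1 - (βj j - μ) / (1 - μ)))
        (cj j * (2 * P) ^ (1 - (βj j - μ) / (1 - μ)) * (M * XT⁻¹) ^ ((βj j - μ) / (1 - μ)))
        (α * ρj j) ((βj j - μ) / (1 - μ)) (t ^ (1 - μ)) (δ ^ (1 - μ)) ε
        hA₁0 hA₂0 hB₁0 hB₂0 (mul_nonneg hα0 (hρj j)) (haj0 j) (hqr j) hx hxX hε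
      calc t ^ (1 - μ) * ((1 + Nβ (v t) ^ ρj j + Nβ (v T) ^ ρj j) * Nbj j (v t - v T))
          ≤ t ^ (1 - μ) *
            ((1 + Q ^ ρj j * (ε ^ (α * ρj j) * (t ^ (1 - μ)) ^ (-(α * ρj j))) + Nβ (v T) ^ ρj j) *
            (cj j * (2 * P) ^ (1 - (βj j - μ) / (1 - μ)) *
                (ε ^ ((βj j - μ) / (1 - μ)) * (t ^ (1 - μ)) ^ (-((βj j - μ) / (1 - μ)))) +
              cj j * (2 * P) ^ (1 - (βj j - μ) / (1 - μ)) *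
                (M * XT⁻¹) ^ ((βj j - μ) / (1 - μ)))) := mul_le_mul_of_nonneg_left hstep1 hx.le
        _ ≤ _ := hstep2
    have hFv : ‖F₂ (v t)‖ ≤ ‖F₂ (v T)‖ +
        C * ∑ j, (1 + Nβ (v t) ^ ρj j + Nβ (v T) ^ ρj j) * Nbj j (v t - v T) := by
      have h := hFdiff t htT T hTIoc
      have h2 : ‖F₂ (v t)‖ - ‖F₂ (v T)‖ ≤ ‖F₂ (v t) - F₂ (v T)‖ := norm_sub_norm_le _ _
      linarith
    calc t ^ (1 - μ) * ‖F₂ (v t)‖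
        ≤ t ^ (1 - μ) * (‖F₂ (v T)‖ +
            C * ∑ j, (1 + Nβ (v t) ^ ρj j + Nβ (v T) ^ ρj j) * Nbj j (v t - v T)) :=
          mul_le_mul_of_nonneg_left hFv hx.le
      _ = t ^ (1 - μ) * ‖F₂ (v T)‖ +
            C * ∑ j, t ^ (1 - μ) * ((1 + Nβ (v t) ^ ρj j + Nβ (v T) ^ ρj j) * Nbj j (v t - v T)) := by
          rw [mul_add]; congr 1
          rw [mul_left_comm, Finset.mul_sum]
      _ ≤ δ ^ (1 - μ) * ‖F₂ (v T)‖ +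
            C * ∑ j, ((1 + Q ^ ρj j + Nβ (v T) ^ ρj j) *
              (cj j * (2 * P) ^ (1 - (βj j - μ) / (1 - μ)) +
                cj j * (2 * P) ^ (1 - (βj j - μ) / (1 - μ)) *
                  (M * XT⁻¹) ^ ((βj j - μ) / (1 - μ)))) * max (δ ^ (1 - μ)) ε :=
          add_le_add (mul_le_mul_of_nonneg_right hxX (norm_nonneg _))
            (mul_le_mul_of_nonneg_left (Finset.sum_le_sum hterm) hC0.le)
      _ = δ ^ (1 - μ) * ‖F₂ (v T)‖ + K * max (δ ^ (1 - μ)) ε := by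
          rw [hKdef, ← Finset.sum_mul]; ring
  -- epsilon-delta form of the vanishing of t^{1-μ} N₁(v t)
  rw [Metric.tendsto_nhdsWithin_nhds] at htend1
  simp only [Real.dist_eq, sub_zero] at htend1
  have hg0 : ∀ t : ℝ, 0 < t → 0 ≤ t ^ (1 - μ) * ‖F₂ (v t)‖ := fun t ht =>
    mul_nonneg (Real.rpow_nonneg ht.le _) (norm_nonneg _)
  have hsmall : ∀ η : ℝ, 0 < η → ∃ δ : ℝ, 0 < δ ∧ δ ≤ T ∧
      ∀ t ∈ Ioc (0:ℝ) δ, t ^ (1 - μ) * ‖F₂ (v t)‖ ≤ η / 2 := by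
    intro η hη
    set D := K + ‖F₂ (v T)‖ + 1 with hDdef
    have hD : 0 < D := by
      have := norm_nonneg (F₂ (v T)); rw [hDdef]; linarith
    set ε := min 1 (η / (2 * D)) with hεdef
    have hεpos : 0 < ε := lt_min one_pos (div_pos hη (by linarith))
    obtain ⟨δ₀, hδ₀pos, hδ₀⟩ := htend1 ε hεpos
    set δ := min (min (δ₀ / 2) T) (ε ^ (1 / (1 - μ))) with hδdef
    have hεr : 0 < ε ^ (1 / (1 - μ)) := Real.rpow_pos_of_pos hεpos _
    have hδpos : 0 < δ := lt_min (lt_min (by linarith) hT) hεr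
    have hδT : δ ≤ T := le_trans (min_le_left _ _) (min_le_right _ _)
    have hφ : ∀ r ∈ Ioc (0:ℝ) δ, r ^ (1 - μ) * N₁ (v r) ≤ ε := by
      intro r hr
      have hr0 : 0 < r := hr.1
      have hrδ₀ : |r| < δ₀ := by
        rw [abs_of_pos hr0]
        have h1 : δ ≤ δ₀ / 2 := le_trans (min_le_left _ _) (min_le_left _ _)
        have := hr.2
        linarith
      have h2 := hδ₀ (mem_Ioi.mpr hr0) hrδ₀
      calc r ^ (1 - μ) * N₁ (v r) ≤ |r ^ (1 - μ) * N₁ (v r)| := le_abs_self _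
        _ ≤ ε := h2.le
    have hXε : δ ^ (1 - μ) ≤ ε := by
      have h1 : δ ≤ ε ^ (1 / (1 - μ)) := min_le_right _ _
      calc δ ^ (1 - μ) ≤ (ε ^ (1 / (1 - μ))) ^ (1 - μ) :=
            Real.rpow_le_rpow hδpos.le h1 h1μ.le
        _ = ε := by
            rw [← Real.rpow_mul hεpos.le, one_div, inv_mul_cancel₀ h1μ.ne', Real.rpow_one]
    refine ⟨δ, hδpos, hδT, fun t ht => ?_⟩
    have hk := key δ hδpos hδT ε hεpos hφ t ht
    rw [max_eq_right hXε] at hk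
    have hεle : ε ≤ η / (2 * D) := min_le_right _ _
    have heq : D * (η / (2 * D)) = η / 2 := by
      field_simp
    have h2 : δ ^ (1 - μ) * ‖F₂ (v T)‖ ≤ ε * ‖F₂ (v T)‖ :=
      mul_le_mul_of_nonneg_right hXε (norm_nonneg _)
    have h4 : (K + ‖F₂ (v T)‖) * ε ≤ D * ε := by
      apply mul_le_mul_of_nonneg_right _ hεpos.le
      rw [hDdef]; linarith
    have h5 : D * ε ≤ D * (η / (2 * D)) := mul_le_mul_of_nonneg_left hεle hD.le
    nlinarith [hk]
  refine ⟨hcontF, ⟨fun t _ => mem_univ _, hcontF,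
    ⟨T ^ (1 - μ) * ‖F₂ (v T)‖ + K * max (T ^ (1 - μ)) M,
      fun t ht => key T hT le_rfl M hMpos hM t ht⟩, ?_⟩, ?_⟩
  · -- tendsto of t^{1-μ} ‖F₂(v t)‖
    rw [Metric.tendsto_nhdsWithin_nhds]
    intro η hη
    obtain ⟨δ, hδpos, hδT, hb⟩ := hsmall η hη
    refine ⟨δ, hδpos, fun {t} ht hd => ?_⟩
    simp only [Real.dist_eq, sub_zero] at hd ⊢
    have ht0 : 0 < t := ht
    rw [abs_of_pos ht0] at hd
    have h1 := hb t ⟨ht0, hd.le⟩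
    rw [abs_of_nonneg (hg0 t ht0)]
    linarith
  · -- tendsto of the E0-norm
    rw [Metric.tendsto_nhdsWithin_nhds]
    intro η hη
    obtain ⟨δ, hδpos, hδT, hb⟩ := hsmall η hη
    refine ⟨δ, hδpos, fun {T'} hT' hd => ?_⟩
    simp only [Real.dist_eq, sub_zero] at hd ⊢
    have hT'0 : 0 < T' := hT'
    rw [abs_of_pos hT'0] at hd
    have hsup_le : normE0 μ T' (fun t => F₂ (v t)) ≤ η / 2 := by
      simp only [normE0]
      apply Real.sSup_le
      · rintro y ⟨t, ht, rfl⟩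
        exact hb t ⟨ht.1, le_trans ht.2 hd.le⟩
      · linarith
    have hsup_0 : 0 ≤ normE0 μ T' (fun t => F₂ (v t)) := by
      simp only [normE0]
      apply Real.sSup_nonneg
      rintro y ⟨t, ht, rfl⟩
      exact hg0 t ht.1
    rw [abs_of_nonneg hsup_0]
    linarith

end QPE
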